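/- Let f(x) be a monic irreducible polynomial of degree d over F_{p^m} and K = F_{p^m}[x]/⟨f(x)^{p^s}⟩. Let b ∈ K/⟨f(x)^{p^s−1}⟩ (viewed in K). The K-submodule S of K² generated by (f(x)·b, 1) satisfies the closure condition ((a₀,a₁) ∈ S ⟹ (0,a₀) ∈ S) if and only if f(x)² b² = 0 in K, i.e., if and only if b ∈ f(x)^{⌈p^s/2⌉−1} K. -/

import Mathlib

open Polynomial

set_option synthInstance.maxHeartbeats 1000000
set_option maxHeartbeats 1000000

lemma key_dvd {F : Type} [Field F] {f : F[X]} (hirr : Irreducible f) (n : ℕ) {c : F[X]}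
    (hc : c ≠ 0) : f ^ n ∣ f ^ 2 * c ^ 2 ↔ f ^ ((n + 1) / 2 - 1) ∣ c := by
  have hp : Prime f := hirr.prime
  have hfin : FiniteMultiplicity f c := FiniteMultiplicity.of_prime_left hp hc
  have he : emultiplicity f c = (multiplicity f c : ℕ∞) :=
    hfin.emultiplicity_eq_multiplicity
  rw [pow_dvd_iff_le_emultiplicity, emultiplicity_mul hp, emultiplicity_pow_self_of_prime hp,
    emultiplicity_pow hp, he, hfin.pow_dvd_iff_le_multiplicity]
  constructor
  · intro h
    have h' : n ≤ 2 + 2 * multiplicity f c := by exact_mod_cast h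
    omega
  · intro h
    have h' : n ≤ 2 + 2 * multiplicity f c := by omega
    exact_mod_cast h'

theorem stmt_12 (p m s : ℕ) (hp : p.Prime) (hm : 0 < m) (hs : 0 < s)
    (F : Type) [Field F] [Fintype F] (hF : Fintype.card F = p ^ m)
    (f : F[X]) (hmon : f.Monic) (hirr : Irreducible f) (d : ℕ) (hd : f.natDegree = d)
    (b : F[X] ⧸ Ideal.span {f ^ p ^ s}) :
    ((∀ a ∈ Submodule.span (F[X] ⧸ Ideal.span {f ^ p ^ s})
          {((Ideal.Quotient.mk (Ideal.span {f ^ p ^ s}) f) * b,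
            (1 : F[X] ⧸ Ideal.span {f ^ p ^ s}))},
        ((0 : F[X] ⧸ Ideal.span {f ^ p ^ s}), a.1) ∈
          Submodule.span (F[X] ⧸ Ideal.span {f ^ p ^ s})
            {((Ideal.Quotient.mk (Ideal.span {f ^ p ^ s}) f) * b,
              (1 : F[X] ⧸ Ideal.span {f ^ p ^ s}))}) ↔
      (Ideal.Quotient.mk (Ideal.span {f ^ p ^ s}) f) ^ 2 * b ^ 2 = 0) ∧
    ((Ideal.Quotient.mk (Ideal.span {f ^ p ^ s}) f) ^ 2 * b ^ 2 = 0 ↔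
      b ∈ Ideal.span
        {(Ideal.Quotient.mk (Ideal.span {f ^ p ^ s}) f) ^ ((p ^ s + 1) / 2 - 1)}) := by
  have hI : (1 : ℕ) ≤ 1 := le_refl 1
  constructor
  · constructor
    · intro h
      have hmem : (Ideal.Quotient.mk (Ideal.span {f ^ p ^ s}) f * b, (1 : F[X] ⧸ Ideal.span {f ^ p ^ s})) ∈
          Submodule.span (F[X] ⧸ Ideal.span {f ^ p ^ s}) {(Ideal.Quotient.mk (Ideal.span {f ^ p ^ s}) f * b, (1 : F[X] ⧸ Ideal.span {f ^ p ^ s}))} :=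
        Submodule.mem_span_singleton_self _
      have h2 := h _ hmem
      rw [Submodule.mem_span_singleton] at h2
      obtain ⟨r, hr⟩ := h2
      have h1 : r * (Ideal.Quotient.mk (Ideal.span {f ^ p ^ s}) f * b) = 0 := congrArg Prod.fst hr
      have h2' : r * 1 = Ideal.Quotient.mk (Ideal.span {f ^ p ^ s}) f * b := congrArg Prod.snd hr
      rw [mul_one] at h2'
      subst h2'
      calc Ideal.Quotient.mk (Ideal.span {f ^ p ^ s}) f ^ 2 * b ^ 2 = Ideal.Quotient.mk (Ideal.span {f ^ p ^ s}) f * b * (Ideal.Quotient.mk (Ideal.span {f ^ p ^ s}) f * b) := by ring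
        _ = 0 := h1
    · intro h0 a ha
      rw [Submodule.mem_span_singleton] at ha ⊢
      obtain ⟨r, rfl⟩ := ha
      refine ⟨r * (Ideal.Quotient.mk (Ideal.span {f ^ p ^ s}) f * b), ?_⟩
      have : r * (Ideal.Quotient.mk (Ideal.span {f ^ p ^ s}) f * b) * (Ideal.Quotient.mk (Ideal.span {f ^ p ^ s}) f * b) = r * (Ideal.Quotient.mk (Ideal.span {f ^ p ^ s}) f ^ 2 * b ^ 2) := by ring
      simp only [Prod.smul_mk, smul_eq_mul, mul_one]
      refine Prod.ext ?_ rfl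
      simp only [this, h0, mul_zero]
  · obtain ⟨c, rfl⟩ := Ideal.Quotient.mk_surjective b
    set t : ℕ := (p ^ s + 1) / 2 - 1 with ht
    have htle : t ≤ p ^ s := by
      have : 1 ≤ p ^ s := Nat.one_le_pow _ _ hp.pos
      omega
    have hzero : Ideal.Quotient.mk (Ideal.span {f ^ p ^ s}) f ^ 2 * Ideal.Quotient.mk (Ideal.span {f ^ p ^ s}) c ^ 2 = 0 ↔ f ^ p ^ s ∣ f ^ 2 * c ^ 2 := by
      rw [show Ideal.Quotient.mk (Ideal.span {f ^ p ^ s}) f ^ 2 * Ideal.Quotient.mk (Ideal.span {f ^ p ^ s}) c ^ 2 = Ideal.Quotient.mk (Ideal.span {f ^ p ^ s}) (f ^ 2 * c ^ 2) by simp [map_mul, map_pow],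
        Ideal.Quotient.eq_zero_iff_mem, Ideal.mem_span_singleton]
    have hmemspan : Ideal.Quotient.mk (Ideal.span {f ^ p ^ s}) c ∈ Ideal.span {Ideal.Quotient.mk (Ideal.span {f ^ p ^ s}) f ^ t} ↔ f ^ t ∣ c := by
      rw [show Ideal.Quotient.mk (Ideal.span {f ^ p ^ s}) f ^ t = Ideal.Quotient.mk (Ideal.span {f ^ p ^ s}) (f ^ t) by simp [map_pow], Ideal.mem_span_singleton]
      constructor
      · rintro ⟨r, hr⟩
        obtain ⟨r', rfl⟩ := Ideal.Quotient.mk_surjective r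
        rw [← map_mul, Ideal.Quotient.eq, Ideal.mem_span_singleton] at hr
        have hdvd : f ^ t ∣ c - f ^ t * r' :=
          dvd_trans (pow_dvd_pow f htle) hr
        have := dvd_add hdvd (Dvd.intro r' rfl)
        simpa using this
      · rintro ⟨r, rfl⟩
        exact ⟨Ideal.Quotient.mk (Ideal.span {f ^ p ^ s}) r, by rw [map_mul]⟩
    rw [hzero, hmemspan]
    rcases eq_or_ne c 0 with rfl | hc
    · simp
    · exact key_dvd hirr (p ^ s) hc
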